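/- For any real number a < −1, the closure in the uniform norm on [a,1] of the set of algebraic polynomials with nonnegative coefficients contains every continuous real-valued function f on [a,1] that vanishes identically on [−1,1]. -/

import Mathlib

open Polynomial Finset

namespace NWaux

/-- Predicate: all coefficients nonnegative. -/
def Pos (p : Polynomial ℝ) : Prop := ∀ k, 0 ≤ p.coeff k

lemma Pos.add {p q : Polynomial ℝ} (hp : Pos p) (hq : Pos q) : Pos (p + q) := fun k => by
  rw [Polynomial.coeff_add]; exact add_nonneg (hp k) (hq k)

lemma Pos.mul {p q : Polynomial ℝ} (hp : Pos p) (hq : Pos q) : Pos (p * q) := fun k => by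
  rw [Polynomial.coeff_mul]
  exact Finset.sum_nonneg fun i _ => mul_nonneg (hp _) (hq _)

lemma Pos.C {c : ℝ} (hc : 0 ≤ c) : Pos (Polynomial.C c) := fun k => by
  rw [Polynomial.coeff_C]; split <;> simp [hc]

lemma Pos.one : Pos (1 : Polynomial ℝ) := by
  have h := Pos.C (by norm_num : (0:ℝ) ≤ 1)
  simpa using h

lemma Pos.X_pow (n : ℕ) : Pos ((X : Polynomial ℝ) ^ n) := fun k => by
  rw [Polynomial.coeff_X_pow]; split <;> norm_num

lemma Pos.pow {p : Polynomial ℝ} (hp : Pos p) (n : ℕ) : Pos (p ^ n) := by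
  induction n with
  | zero => simpa using Pos.one
  | succ n ih => rw [pow_succ]; exact ih.mul hp

lemma Pos.sum {ι : Type*} {s : Finset ι} {f : ι → Polynomial ℝ}
    (h : ∀ i ∈ s, Pos (f i)) : Pos (∑ i ∈ s, f i) := fun k => by
  rw [Polynomial.finset_sum_coeff]
  exact Finset.sum_nonneg fun i hi => h i hi k

lemma Pos.abs_eval_le {p : Polynomial ℝ} (hp : Pos p) {x y : ℝ} (h : |x| ≤ y) :
    |p.eval x| ≤ p.eval y := by
  rw [Polynomial.eval_eq_sum_range, Polynomial.eval_eq_sum_range]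
  refine (Finset.abs_sum_le_sum_abs _ _).trans ?_
  refine Finset.sum_le_sum fun i _ => ?_
  rw [abs_mul, abs_pow, abs_of_nonneg (hp i)]
  exact mul_le_mul_of_nonneg_left
    (pow_le_pow_left₀ (abs_nonneg x) h i) (hp i)

/-- Bernoulli lower bound. -/
lemma bern_low {t : ℝ} (K : ℕ) (ht : t ≤ 2) : 1 - (K:ℝ) * t ≤ (1 - t) ^ K := by
  have h := one_add_mul_le_pow (a := -t) (by linarith) K
  have e1 : 1 + (K:ℝ) * (-t) = 1 - (K:ℝ) * t := by ring
  have e2 : (1 + -t) = 1 - t := by ring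
  rwa [e1, e2] at h

/-- Key decay estimate: `(1-t)^K ≤ η` when `η * (K*t) ≥ 1`. -/
lemma decay {t η : ℝ} (K : ℕ) (h0 : 0 ≤ t) (h1 : t ≤ 1) (hη : 0 < η)
    (hKt : 1 ≤ η * ((K:ℝ) * t)) : (1 - t) ^ K ≤ η := by
  have hb : 1 + (K:ℝ) * t ≤ (1 + t) ^ K := one_add_mul_le_pow (by linarith) K
  have hu : 0 ≤ (1 - t) ^ K := pow_nonneg (by linarith) K
  have h2 : (1 - t) ^ K * (1 + (K:ℝ) * t) ≤ 1 := by
    calc (1 - t) ^ K * (1 + (K:ℝ) * t) ≤ (1 - t) ^ K * (1 + t) ^ K :=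
          mul_le_mul_of_nonneg_left hb hu
      _ = ((1 - t) * (1 + t)) ^ K := (mul_pow _ _ _).symm
      _ ≤ 1 := pow_le_one₀ (by nlinarith) (by nlinarith)
  have h3 : (1 - t) ^ K * ((K:ℝ) * t) ≤ 1 := by nlinarith
  nlinarith [mul_le_mul_of_nonneg_left hKt hu, mul_le_mul_of_nonneg_left h3 hη.le]

/-- Upper bound `(1+x)^K ≤ 1 + 2*K*x` for small `K*x`. -/
lemma upper_one_add {x : ℝ} (K : ℕ) (hx0 : 0 ≤ x) (hx1 : x ≤ 1)
    (hK : (K:ℝ) * x ≤ 1/2) : (1 + x) ^ K ≤ 1 + 2 * ((K:ℝ) * x) := by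
  have h1 : 1 - (K:ℝ) * x ≤ (1 - x) ^ K := bern_low K (by linarith)
  have h2 : (1 + x) ^ K * (1 - x) ^ K ≤ 1 := by
    rw [← mul_pow]
    have e : (1 + x) * (1 - x) = 1 - x ^ 2 := by ring
    rw [e]
    exact pow_le_one₀ (by nlinarith) (by nlinarith)
  have h3 : (0:ℝ) < 1 - (K:ℝ) * x := by linarith
  have hu : 0 ≤ (1 + x) ^ K := pow_nonneg (by linarith) K
  have h4 : (1 + x) ^ K * (1 - (K:ℝ) * x) ≤ 1 :=
    le_trans (mul_le_mul_of_nonneg_left h1 hu) h2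
  have hKx0 : 0 ≤ (K:ℝ) * x := mul_nonneg (Nat.cast_nonneg K) hx0
  have h5 : (1:ℝ) ≤ (1 + 2 * ((K:ℝ) * x)) * (1 - (K:ℝ) * x) := by nlinarith
  have := le_trans h4 h5
  exact le_of_mul_le_mul_right this h3




lemma sq_le_one_unit {w : ℝ} (h0 : 0 ≤ w) (h1 : w ≤ 1) : (1-w)*(1-w) ≤ 1 := by nlinarith

lemma sq_le_one_unit' {u : ℝ} (h1 : 1 ≤ u) (h2 : u ≤ 2) : (u-1)*(u-1) ≤ 1 := by nlinarith

lemma small_sq {v η : ℝ} (h0 : 0 ≤ v) (h1 : v ≤ η) (hη : η ≤ 1) : v*v ≤ η := by nlinarith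

lemma plateau_sq {w η : ℝ} (h0 : 0 ≤ w) (h1 : w ≤ η) (hη : η ≤ 1) :
    |(1-w)*(1-w) - 1| ≤ 2*η := by
  rw [abs_le]; constructor <;> nlinarith

/-! ### The emulator polynomial -/

noncomputable def mpoly (N K : ℕ) (B : ℝ) : Polynomial ℝ :=
  Polynomial.C B⁻¹ * X ^ N * ∑ k ∈ Finset.range K, (1 + Polynomial.C B⁻¹ * X ^ N) ^ k

lemma mpoly_pos {N K : ℕ} {B : ℝ} (hB : 0 ≤ B) : Pos (mpoly N K B) := by
  have hC : Pos (Polynomial.C B⁻¹) := Pos.C (inv_nonneg.2 hB)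
  exact (hC.mul (Pos.X_pow N)).mul
    (Pos.sum fun k _ => (Pos.one.add (hC.mul (Pos.X_pow N))).pow k)

lemma mpoly_eval (N K : ℕ) (B : ℝ) (x : ℝ) :
    (mpoly N K B).eval x = (1 + x ^ N / B) ^ K - 1 := by
  have hgeo := geom_sum_mul (1 + x ^ N / B) K
  have h2 : 1 + x ^ N / B - 1 = x ^ N / B := by ring
  rw [h2] at hgeo
  simp only [mpoly, Polynomial.eval_mul, Polynomial.eval_C, Polynomial.eval_pow,
    Polynomial.eval_X, Polynomial.eval_finset_sum, Polynomial.eval_add, Polynomial.eval_one]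
  have h1 : B⁻¹ * x ^ N = x ^ N / B := by rw [inv_mul_eq_div]
  rw [h1, mul_comm]
  exact hgeo

section Emulator

variable {b c η B : ℝ} {N K : ℕ}

/-- plateau estimate: for `c ≤ y ≤ b`, `(1 - y^N/B)^K ∈ [0, η]`. -/
lemma emu_plateau (hc : 1 ≤ c) (hη : 0 < η)
    (hB : B = η * K * c ^ N) (hBb : b ^ N ≤ B)
    {y : ℝ} (hy1 : c ≤ y) (hy2 : y ≤ b) :
    0 ≤ (1 - y ^ N / B) ^ K ∧ (1 - y ^ N / B) ^ K ≤ η := by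
  have hc0 : (0:ℝ) < c := by linarith
  have hB0 : 0 < B := lt_of_lt_of_le (pow_pos (by linarith) N) hBb
  have hy0 : 0 ≤ y := by linarith
  have ht0 : 0 ≤ y ^ N / B := div_nonneg (pow_nonneg hy0 N) hB0.le
  have ht1 : y ^ N / B ≤ 1 := by
    rw [div_le_one hB0]; exact le_trans (pow_le_pow_left₀ hy0 hy2 N) hBb
  refine ⟨pow_nonneg (by linarith) K, ?_⟩
  apply decay K ht0 ht1 hη
  have hK0 : (0:ℝ) < K := by
    rcases Nat.eq_zero_or_pos K with h | h
    · exfalso; rw [h] at hB; simp at hB; rw [hB] at hB0; linarith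
    · exact_mod_cast h
  have hcy : c ^ N ≤ y ^ N := pow_le_pow_left₀ hc0.le hy1 N
  have key : η * ((K:ℝ) * (c ^ N / B)) = 1 := by
    rw [hB]; field_simp
  have hmono : c ^ N / B ≤ y ^ N / B := by gcongr
  nlinarith [mul_pos hη hK0]

/-- range estimate: for `0 ≤ y ≤ b`, `(1 - y^N/B)^K ∈ [0,1]`. -/
lemma emu_range (hBb : b ^ N ≤ B) (hb0 : 0 < b)
    {y : ℝ} (hy1 : 0 ≤ y) (hy2 : y ≤ b) :
    0 ≤ (1 - y ^ N / B) ^ K ∧ (1 - y ^ N / B) ^ K ≤ 1 := by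
  have hB0 : 0 < B := lt_of_lt_of_le (pow_pos hb0 N) hBb
  have ht1 : y ^ N / B ≤ 1 := by
    rw [div_le_one hB0]; exact le_trans (pow_le_pow_left₀ hy1 hy2 N) hBb
  have ht0 : 0 ≤ y ^ N / B := div_nonneg (pow_nonneg hy1 N) hB0.le
  exact ⟨pow_nonneg (by linarith) K, pow_le_one₀ (by linarith) (by linarith)⟩

/-- gap estimate: `1 - (1-y^N/B)^K ≤ K * y^N / B`. -/
lemma emu_gap (hBb : b ^ N ≤ B) (hb0 : 0 < b)
    {y : ℝ} (hy1 : 0 ≤ y) (hy2 : y ≤ b) :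
    1 - (1 - y ^ N / B) ^ K ≤ (K:ℝ) * (y ^ N / B) := by
  have hB0 : 0 < B := lt_of_lt_of_le (pow_pos hb0 N) hBb
  have ht1 : y ^ N / B ≤ 1 := by
    rw [div_le_one hB0]; exact le_trans (pow_le_pow_left₀ hy1 hy2 N) hBb
  have h := bern_low (t := y ^ N / B) K (by linarith)
  linarith

/-- value at 1 : `(1 + 1/B)^K - 1 ≤ 2 * (K/B)`. -/
lemma emu_one (hB1 : 1 ≤ B) (hKB : (K:ℝ) / B ≤ 1/2) :
    (1 + 1 / B) ^ K - 1 ≤ 2 * ((K:ℝ) / B) := by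
  have hB0 : (0:ℝ) < B := by linarith
  have h := upper_one_add (x := 1 / B) K (by positivity)
    (by rw [div_le_one hB0]; linarith)
    (by rw [mul_one_div]; exact hKB)
  rw [mul_one_div] at h
  linarith

end Emulator

end NWaux

set_option maxHeartbeats 1600000 in
open NWaux in
/-- For a < -1, the uniform closure on [a,1] of the polynomials with nonnegative
coefficients contains every continuous function on [a,1] vanishing identically on [-1,1]. -/
theorem nussbaum_walsh (a : ℝ) (ha : a < -1) (F : C(Set.Icc a 1, ℝ))
    (hF : ∀ x : Set.Icc a 1, (x : ℝ) ∈ Set.Icc (-1:ℝ) 1 → F x = 0) :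
    F ∈ closure {G : C(Set.Icc a 1, ℝ) | ∃ p : Polynomial ℝ,
        (∀ k, 0 ≤ p.coeff k) ∧ ∀ x : Set.Icc a 1, G x = p.eval (x : ℝ)} := by
  classical
  rw [Metric.mem_closure_iff]
  intro ε hε
  set b : ℝ := -a with hbdef
  have hb1 : 1 < b := by rw [hbdef]; linarith
  have hab : a = -b := by rw [hbdef]; ring
  have ha1 : a ≤ 1 := by linarith
  -- the error budget
  set E : ℝ := min ε 1 / 8 with hEdef
  have hmin0 : 0 < min ε 1 := lt_min hε one_pos
  have hE0 : 0 < E := by rw [hEdef]; linarith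
  have hE1 : E ≤ 1/8 := by
    rw [hEdef]; have := min_le_right ε 1; linarith
  have hEε : 8 * E < ε + ε := by
    rw [hEdef]; have := min_le_left ε 1; linarith
  -- smallness of F near -1
  have hm1mem : (-1:ℝ) ∈ Set.Icc a 1 := ⟨by linarith, by norm_num⟩
  obtain ⟨δ₀, hδ₀pos, hδ₀⟩ := Metric.continuousAt_iff.mp
    (F.continuous.continuousAt (x := ⟨-1, hm1mem⟩)) E hE0
  have hFz₀ : F ⟨-1, hm1mem⟩ = 0 := hF _ (by constructor <;> norm_num)
  set δ : ℝ := min (δ₀/4) ((b-1)/3) with hδdef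
  have hδpos : 0 < δ := by
    rw [hδdef]; apply lt_min (by linarith) (by linarith)
  have hδb : 3 * δ ≤ b - 1 := by
    rw [hδdef]; have := min_le_right (δ₀/4) ((b-1)/3); linarith
  have hδδ₀ : 3 * δ < δ₀ := by
    rw [hδdef]; have := min_le_left (δ₀/4) ((b-1)/3); linarith
  set c₁ : ℝ := 1 + δ with hc₁def
  set c₂ : ℝ := 1 + 2*δ with hc₂def
  have hc₁1 : 1 < c₁ := by rw [hc₁def]; linarith
  have hc₂1 : 1 < c₂ := by rw [hc₂def]; linarith
  have hc₁₂ : c₁ < c₂ := by rw [hc₁def, hc₂def]; linarith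
  have hc₂b : c₂ ≤ b := by rw [hc₂def]; linarith
  have hc₁b : c₁ ≤ b := by linarith
  have smallF : ∀ z : Set.Icc a 1, -(1+3*δ) ≤ (z:ℝ) → |F z| ≤ E := by
    intro z hz
    rcases le_or_gt (-1:ℝ) (z:ℝ) with h | h
    · rw [hF z ⟨h, z.2.2⟩]; simpa using hE0.le
    · have hd : dist z (⟨-1, hm1mem⟩ : Set.Icc a 1) < δ₀ := by
        rw [Subtype.dist_eq, Real.dist_eq]
        have habs : |(z:ℝ) - (-1)| = -1 - (z:ℝ) := by
          rw [abs_of_nonpos (by linarith)]; ring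
        rw [habs]; linarith
      have hcl := hδ₀ hd
      rw [hFz₀, Real.dist_eq, sub_zero] at hcl
      exact hcl.le
  -- Weierstrass approximation
  have hWei : F ∈ closure ((polynomialFunctions (Set.Icc a 1) : Set C(Set.Icc a 1, ℝ))) := by
    have h1 : F ∈ (polynomialFunctions (Set.Icc a 1)).topologicalClosure := by
      rw [polynomialFunctions_closure_eq_top a 1]; trivial
    rwa [← Subalgebra.topologicalClosure_coe]
  obtain ⟨g, hg, hgd⟩ := Metric.mem_closure_iff.mp hWei E hE0
  rw [polynomialFunctions_coe] at hg
  obtain ⟨P, rfl⟩ := hg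
  have hP : ∀ z : Set.Icc a 1, |P.eval (z:ℝ) - F z| ≤ E := by
    intro z
    have h1 := ContinuousMap.dist_apply_le_dist (f := F)
      (g := Polynomial.toContinuousMapOnAlgHom (Set.Icc a 1) P) z
    have h2 : dist (F z) (P.eval (z:ℝ)) < E := by
      apply lt_of_le_of_lt _ hgd
      simpa using h1
    rw [Real.dist_eq] at h2
    rw [abs_sub_comm]
    exact h2.le
  clear hgd hδ₀ hWei
  -- constants
  set d : ℕ := P.natDegree with hddef
  set W : ℝ := ∑ k ∈ Finset.range (d+1), |P.coeff k| * b ^ k with hWdef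
  have hW0 : 0 ≤ W :=
    Finset.sum_nonneg fun k _ => mul_nonneg (abs_nonneg _) (pow_nonneg (by linarith) k)
  set η : ℝ := E / (W+1) with hηdef
  have hη0 : 0 < η := by rw [hηdef]; positivity
  have hηE : η ≤ E := by
    rw [hηdef]; apply div_le_self hE0.le (by linarith)
  have hη1 : η ≤ 1/8 := hηE.trans hE1
  have hηW : η * W ≤ E := by
    have h1 : η * (W+1) = E := by rw [hηdef]; field_simp
    have h2 : η * (W+1) = η*W + η := by ring
    linarith
  -- ===== emulator  m =====
  obtain ⟨n₁, hn₁⟩ := pow_unbounded_of_one_lt (R := ℝ) (4/η) hc₁1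
  set N₁ : ℕ := 2*n₁+1 with hN₁def
  have hoddN₁ : Odd N₁ := ⟨n₁, by rw [hN₁def]⟩
  have hN₁ : 4/η ≤ c₁ ^ N₁ :=
    le_trans hn₁.le (pow_le_pow_right₀ hc₁1.le (by omega))
  clear_value N₁
  have hc₁N₁ : (0:ℝ) < c₁ ^ N₁ := pow_pos (by linarith) N₁
  set K₁ : ℕ := ⌈(b/c₁)^N₁ / η⌉₊ + 1 with hK₁def
  have hK₁0 : 0 < (K₁:ℝ) := by
    rw [hK₁def]; push_cast; positivity
  have hK₁ge : (b/c₁)^N₁/η ≤ (K₁:ℝ) := by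
    rw [hK₁def]; push_cast
    have := Nat.le_ceil ((b/c₁)^N₁/η)
    linarith
  clear_value K₁
  set B₁ : ℝ := η * K₁ * c₁ ^ N₁ with hB₁def
  have hB₁b : b ^ N₁ ≤ B₁ := by
    have e : η * ((b/c₁)^N₁/η) * c₁^N₁ = b ^ N₁ := by
      have h1 : η ≠ 0 := ne_of_gt hη0
      have h2 : (c₁:ℝ)^N₁ ≠ 0 := ne_of_gt hc₁N₁
      rw [div_pow]
      field_simp
    calc b ^ N₁ = η * ((b/c₁)^N₁/η) * c₁^N₁ := e.symm
      _ ≤ η * K₁ * c₁^N₁ := by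
          apply mul_le_mul_of_nonneg_right _ hc₁N₁.le
          exact mul_le_mul_of_nonneg_left hK₁ge hη0.le
  have hB₁1 : (1:ℝ) ≤ B₁ := le_trans (one_le_pow₀ hb1.le) hB₁b
  have hB₁0 : (0:ℝ) < B₁ := by linarith
  have hηc₁ : 4 ≤ η * c₁ ^ N₁ := by
    have h := mul_le_mul_of_nonneg_left hN₁ hη0.le
    have e2 : η * (4/η) = 4 := by field_simp
    linarith
  have hKB₁ : (K₁:ℝ)/B₁ ≤ 1/4 := by
    have e : (K₁:ℝ)/B₁ = 1/(η * c₁ ^ N₁) := by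
      rw [hB₁def]; field_simp
    rw [e]
    have := one_div_le_one_div_of_le (by norm_num : (0:ℝ) < 4) hηc₁
    simpa using this
  -- the function m(x)
  set mv : ℝ → ℝ := fun x => (1 + x ^ N₁ / B₁) ^ K₁ - 1 with hmvdef
  clear_value B₁
  have mneg : ∀ x : ℝ, mv x = (1 - (-x) ^ N₁ / B₁) ^ K₁ - 1 := by
    intro x
    simp only [hmvdef]
    rw [hoddN₁.neg_pow x]
    ring_nf
  have mPlateau : ∀ x : ℝ, -b ≤ x → x ≤ -c₁ → 0 ≤ mv x + 1 ∧ mv x + 1 ≤ η := by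
    intro x h1 h2
    have := NWaux.emu_plateau (b := b) (c := c₁) (N := N₁) (K := K₁)
      hc₁1.le hη0 hB₁def hB₁b (y := -x) (by linarith) (by linarith)
    rw [mneg x]
    constructor <;> [linarith [this.1]; linarith [this.2]]
  have mIn : ∀ x : ℝ, -b ≤ x → x ≤ 1 → |mv x| ≤ 1 := by
    intro x h1 h2
    rcases le_or_gt x 0 with hx | hx
    · have := NWaux.emu_range (b := b) (N := N₁) (K := K₁)
        hB₁b (by linarith) (y := -x) (by linarith) (by linarith)
      rw [mneg x]
      rw [abs_le]
      constructor <;> [linarith [this.2]; linarith [this.1]]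
    · have hlow : (0:ℝ) ≤ mv x := by
        simp only [hmvdef]
        have h3 : (1:ℝ) ≤ 1 + x ^ N₁ / B₁ := by
          have : 0 ≤ x ^ N₁ / B₁ := by positivity
          linarith
        have := one_le_pow₀ (n := K₁) h3
        linarith
      have hup : mv x ≤ 1 := by
        simp only [hmvdef]
        have hxN : x ^ N₁ ≤ 1 := pow_le_one₀ hx.le h2
        have h3 : 1 + x ^ N₁ / B₁ ≤ 1 + 1 / B₁ := by
          have : x ^ N₁ / B₁ ≤ 1 / B₁ := by gcongr
          linarith
        have h4 : (1 + x ^ N₁ / B₁) ^ K₁ ≤ (1 + 1 / B₁) ^ K₁ := by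
          apply pow_le_pow_left₀ (by positivity) h3
        have h5 : (1 + 1 / B₁) ^ K₁ - 1 ≤ 2 * ((K₁:ℝ)/B₁) :=
          NWaux.emu_one hB₁1 (by linarith)
        linarith
      rw [abs_le]; constructor <;> linarith
    -- ===== the step function s =====
  have hc₂₁ : 1 < c₂/c₁ := by
    rw [lt_div_iff₀ (by linarith)]; linarith
  obtain ⟨n₂, hn₂⟩ := pow_unbounded_of_one_lt (R := ℝ) (2/η^2) hc₂1
  obtain ⟨n₃, hn₃⟩ := pow_unbounded_of_one_lt (R := ℝ) (1/η^2) hc₂₁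
  set N₂ : ℕ := 2*(max n₂ n₃)+1 with hN₂def
  have hN₂a : 2/η^2 ≤ c₂ ^ N₂ :=
    le_trans hn₂.le (pow_le_pow_right₀ hc₂1.le (by omega))
  have hN₂b : 1/η^2 ≤ (c₂/c₁) ^ N₂ :=
    le_trans hn₃.le (pow_le_pow_right₀ hc₂₁.le (by omega))
  have hoddN₂ : Odd N₂ := ⟨max n₂ n₃, by rw [hN₂def]⟩
  clear_value N₂
  have hc₂N₂ : (0:ℝ) < c₂ ^ N₂ := pow_pos (by linarith) N₂
  have hc₁N₂ : (0:ℝ) < c₁ ^ N₂ := pow_pos (by linarith) N₂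
  set K₂ : ℕ := ⌈(b/c₂)^N₂ / η⌉₊ + 1 with hK₂def
  have hK₂0 : 0 < (K₂:ℝ) := by rw [hK₂def]; push_cast; positivity
  have hK₂ge : (b/c₂)^N₂/η ≤ (K₂:ℝ) := by
    rw [hK₂def]; push_cast
    have := Nat.le_ceil ((b/c₂)^N₂/η)
    linarith
  clear_value K₂
  set B₂ : ℝ := η * K₂ * c₂ ^ N₂ with hB₂def
  have hB₂b : b ^ N₂ ≤ B₂ := by
    have e : η * ((b/c₂)^N₂/η) * c₂^N₂ = b ^ N₂ := by
      have h1 : η ≠ 0 := ne_of_gt hη0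
      have h2 : (c₂:ℝ)^N₂ ≠ 0 := ne_of_gt hc₂N₂
      rw [div_pow]
      field_simp
    calc b ^ N₂ = η * ((b/c₂)^N₂/η) * c₂^N₂ := e.symm
      _ ≤ η * K₂ * c₂^N₂ := by
          apply mul_le_mul_of_nonneg_right _ hc₂N₂.le
          exact mul_le_mul_of_nonneg_left hK₂ge hη0.le
  have hB₂1 : (1:ℝ) ≤ B₂ := le_trans (one_le_pow₀ hb1.le) hB₂b
  have hB₂0 : (0:ℝ) < B₂ := by linarith
  have hKB₂ : (K₂:ℝ)/B₂ = 1/(η * c₂ ^ N₂) := by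
    have h1 : η ≠ 0 := ne_of_gt hη0
    have h2 : (c₂:ℝ)^N₂ ≠ 0 := ne_of_gt hc₂N₂
    have h3 : (K₂:ℝ) ≠ 0 := ne_of_gt hK₂0
    rw [hB₂def]; field_simp
  have hKB₂le : (K₂:ℝ)/B₂ ≤ η/2 := by
    rw [hKB₂]
    have hpos : (0:ℝ) < η * c₂ ^ N₂ := by positivity
    rw [div_le_div_iff₀ hpos (by norm_num)]
    have hηne : η ≠ 0 := ne_of_gt hη0
    have hmul := mul_le_mul_of_nonneg_left hN₂a (by positivity : (0:ℝ) ≤ η^2)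
    have e2 : η^2 * (2/η^2) = 2 := by field_simp
    rw [e2] at hmul
    have e3 : η * c₂ ^ N₂ * η = η^2 * c₂^N₂ := by ring
    linarith
  have hKB₂le' : (K₂:ℝ)/B₂ ≤ 1/2 := le_trans hKB₂le (by linarith)
  have hgap₂ : (K₂:ℝ) * (c₁^N₂ / B₂) ≤ η := by
    have e : (K₂:ℝ) * (c₁^N₂/B₂) = c₁^N₂ * ((K₂:ℝ)/B₂) := by ring
    rw [e, hKB₂]
    have hd : (c₂/c₁)^N₂ = c₂^N₂/c₁^N₂ := div_pow c₂ c₁ N₂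
    rw [hd] at hN₂b
    have h1 : c₁^N₂ ≤ η^2 * c₂^N₂ := by
      rw [div_le_div_iff₀ (by positivity) hc₁N₂] at hN₂b
      linarith
    have hpos : (0:ℝ) < η * c₂ ^ N₂ := by positivity
    rw [mul_one_div, div_le_iff₀ hpos]
    have e4 : η * (η * c₂ ^ N₂) = η^2 * c₂^N₂ := by ring
    linarith
  clear_value B₂
  set sv : ℝ → ℝ := fun x =>
      ((1 + x ^ N₂ / B₂) ^ K₂ - 1) * ((1 + x ^ N₂ / B₂) ^ K₂ - 1) with hsvdef
  have sneg : ∀ x : ℝ,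
      sv x = (1 - (1 - (-x) ^ N₂ / B₂) ^ K₂) * (1 - (1 - (-x) ^ N₂ / B₂) ^ K₂) := by
    intro x
    simp only [hsvdef]
    rw [hoddN₂.neg_pow x]
    ring_nf
  have spos : ∀ x : ℝ, 0 ≤ sv x := by
    intro x
    simp only [hsvdef]
    exact mul_self_nonneg _
  have sIn : ∀ x : ℝ, -b ≤ x → x ≤ 1 → sv x ≤ 1 := by
    intro x h1 h2
    rcases le_or_gt x 0 with hx | hx
    · have hw := NWaux.emu_range (b := b) (N := N₂) (K := K₂)
        hB₂b (by linarith) (y := -x) (by linarith) (by linarith)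
      rw [sneg x]
      exact NWaux.sq_le_one_unit hw.1 hw.2
    · have hxN : x ^ N₂ ≤ 1 := pow_le_one₀ hx.le h2
      have h3 : 1 + x ^ N₂ / B₂ ≤ 1 + 1 / B₂ := by
        have : x ^ N₂ / B₂ ≤ 1 / B₂ := by gcongr
        linarith
      have h4 : (1 + x ^ N₂ / B₂) ^ K₂ ≤ (1 + 1 / B₂) ^ K₂ :=
        pow_le_pow_left₀ (by positivity) h3 K₂
      have h5 : (1 + 1 / B₂) ^ K₂ - 1 ≤ 2 * ((K₂:ℝ)/B₂) :=
        NWaux.emu_one hB₂1 hKB₂le'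
      have hlow : (1:ℝ) ≤ (1 + x ^ N₂ / B₂) ^ K₂ := by
        apply one_le_pow₀
        have : (0:ℝ) ≤ x ^ N₂ / B₂ := by positivity
        linarith
      simp only [hsvdef]
      exact NWaux.sq_le_one_unit' hlow (by linarith)
  have sPlateau : ∀ x : ℝ, -b ≤ x → x ≤ -c₂ → |sv x - 1| ≤ 2*η := by
    intro x h1 h2
    have hw := NWaux.emu_plateau (b := b) (c := c₂) (N := N₂) (K := K₂)
      hc₂1.le hη0 hB₂def hB₂b (y := -x) (by linarith) (by linarith)
    rw [sneg x]
    exact NWaux.plateau_sq hw.1 hw.2 (by linarith)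
  have sSmall : ∀ x : ℝ, -c₁ ≤ x → x ≤ 1 → sv x ≤ η := by
    intro x h1 h2
    rcases le_or_gt x 0 with hx | hx
    · -- gap region
      have hy1 : (0:ℝ) ≤ -x := by linarith
      have hy2 : -x ≤ b := by linarith
      have hw := NWaux.emu_range (b := b) (N := N₂) (K := K₂)
        hB₂b (by linarith) (y := -x) hy1 hy2
      have hgapest := NWaux.emu_gap (b := b) (N := N₂) (K := K₂)
        hB₂b (by linarith) (y := -x) hy1 hy2
      have hyN : (-x) ^ N₂ ≤ c₁ ^ N₂ := pow_le_pow_left₀ hy1 (by linarith) N₂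
      have h3 : (K₂:ℝ) * ((-x) ^ N₂ / B₂) ≤ (K₂:ℝ) * (c₁^N₂ / B₂) := by
        apply mul_le_mul_of_nonneg_left _ hK₂0.le
        gcongr
      have h4 : 1 - (1 - (-x) ^ N₂ / B₂) ^ K₂ ≤ η := le_trans hgapest (le_trans h3 hgap₂)
      rw [sneg x]
      have h0v : 0 ≤ 1 - (1 - (-x) ^ N₂ / B₂) ^ K₂ := by linarith [hw.2]
      exact NWaux.small_sq h0v h4 (by linarith)
    · -- [0,1] region
      have hxN : x ^ N₂ ≤ 1 := pow_le_one₀ hx.le h2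
      have h3 : 1 + x ^ N₂ / B₂ ≤ 1 + 1 / B₂ := by
        have : x ^ N₂ / B₂ ≤ 1 / B₂ := by gcongr
        linarith
      have h4 : (1 + x ^ N₂ / B₂) ^ K₂ ≤ (1 + 1 / B₂) ^ K₂ :=
        pow_le_pow_left₀ (by positivity) h3 K₂
      have h5 : (1 + 1 / B₂) ^ K₂ - 1 ≤ 2 * ((K₂:ℝ)/B₂) :=
        NWaux.emu_one hB₂1 hKB₂le'
      have hlow : (1:ℝ) ≤ (1 + x ^ N₂ / B₂) ^ K₂ := by
        apply one_le_pow₀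
        have : (0:ℝ) ≤ x ^ N₂ / B₂ := by positivity
        linarith
      simp only [hsvdef]
      have h0v : (0:ℝ) ≤ (1 + x ^ N₂ / B₂) ^ K₂ - 1 := by linarith
      have h1v : (1 + x ^ N₂ / B₂) ^ K₂ - 1 ≤ η := by linarith
      have e5 : ((1 + x ^ N₂ / B₂) ^ K₂ - 1) * ((1 + x ^ N₂ / B₂) ^ K₂ - 1) ≤ η :=
        NWaux.small_sq h0v h1v (by linarith)
      exact e5
    -- ===== the polynomials =====
  set mp : Polynomial ℝ := NWaux.mpoly N₁ K₁ B₁ with hmpdef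
  set sp : Polynomial ℝ := NWaux.mpoly N₂ K₂ B₂ with hspdef
  have hmpeval : ∀ x : ℝ, mp.eval x = mv x := by
    intro x; rw [hmpdef, NWaux.mpoly_eval]
  have hspeval : ∀ x : ℝ, (sp * sp).eval x = sv x := by
    intro x; rw [Polynomial.eval_mul, hspdef, NWaux.mpoly_eval]
  set gp : Polynomial ℝ := ∑ k ∈ Finset.range (d+1),
      Polynomial.C |P.coeff k| * Polynomial.X^k *
        (if 0 ≤ P.coeff k then 1 else mp) with hgpdef
  have hgppos : NWaux.Pos gp := by
    rw [hgpdef]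
    apply NWaux.Pos.sum
    intro k _
    apply NWaux.Pos.mul
    · exact NWaux.Pos.mul (NWaux.Pos.C (abs_nonneg _)) (NWaux.Pos.X_pow k)
    · split_ifs with h
      · exact NWaux.Pos.one
      · rw [hmpdef]; exact NWaux.mpoly_pos hB₁0.le
  have hgpeval : ∀ x : ℝ, gp.eval x = ∑ k ∈ Finset.range (d+1),
      |P.coeff k| * x^k * (if 0 ≤ P.coeff k then 1 else mv x) := by
    intro x
    rw [hgpdef, Polynomial.eval_finset_sum]
    refine Finset.sum_congr rfl fun k _ => ?_
    rw [Polynomial.eval_mul, Polynomial.eval_mul, Polynomial.eval_C,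
      Polynomial.eval_pow, Polynomial.eval_X]
    congr 1
    split_ifs with h
    · simp
    · exact hmpeval x
  have hPe : ∀ x : ℝ, P.eval x = ∑ k ∈ Finset.range (d+1), P.coeff k * x^k := by
    intro x
    rw [hddef]
    exact Polynomial.eval_eq_sum_range x
  -- error of g against P on the plateau
  have gErr : ∀ x : ℝ, -b ≤ x → x ≤ -c₁ → |gp.eval x - P.eval x| ≤ E := by
    intro x h1 h2
    have hxb : |x| ≤ b := abs_le.2 ⟨h1, by linarith⟩
    rw [hgpeval, hPe, ← Finset.sum_sub_distrib]
    refine le_trans (Finset.abs_sum_le_sum_abs _ _) ?_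
    have hsum : ∀ k ∈ Finset.range (d+1),
        |(|P.coeff k| * x^k * (if 0 ≤ P.coeff k then 1 else mv x)) - P.coeff k * x^k|
          ≤ η * (|P.coeff k| * b^k) := by
      intro k _
      rcases le_or_gt 0 (P.coeff k) with h | h
      · rw [if_pos h, abs_of_nonneg h, mul_one, sub_self, abs_zero]
        positivity
      · have hcneg : |P.coeff k| = -P.coeff k := abs_of_neg h
        rw [if_neg (not_le.2 h), hcneg]
        have e : -P.coeff k * x ^ k * mv x - P.coeff k * x ^ k
            = (-P.coeff k) * x ^ k * (mv x + 1) := by ring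
        rw [e, abs_mul, abs_mul]
        obtain ⟨hp0, hp1⟩ := mPlateau x h1 h2
        have h5 : |mv x + 1| ≤ η := by rw [abs_of_nonneg hp0]; exact hp1
        have h6 : |(-P.coeff k)| = -P.coeff k := abs_of_pos (by linarith)
        have h7 : |x ^ k| ≤ b ^ k := by
          rw [abs_pow]; exact pow_le_pow_left₀ (abs_nonneg x) hxb k
        calc |(-P.coeff k)| * |x ^ k| * |mv x + 1|
            ≤ (-P.coeff k) * b ^ k * η := by
              rw [h6]
              apply mul_le_mul _ h5 (abs_nonneg _)
                (mul_nonneg (by linarith) (by positivity))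
              exact mul_le_mul_of_nonneg_left h7 (by linarith)
          _ = η * (-P.coeff k * b ^ k) := by ring
    refine le_trans (Finset.sum_le_sum hsum) ?_
    rw [← Finset.mul_sum, ← hWdef]
    exact hηW
  -- global bound for g
  have gBound : ∀ x : ℝ, -b ≤ x → x ≤ 1 → |gp.eval x| ≤ W := by
    intro x h1 h2
    have hxb : |x| ≤ b := abs_le.2 ⟨h1, by linarith⟩
    have hmx : |mv x| ≤ 1 := mIn x h1 h2
    rw [hgpeval, hWdef]
    refine le_trans (Finset.abs_sum_le_sum_abs _ _) ?_
    refine Finset.sum_le_sum fun k _ => ?_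
    rw [abs_mul, abs_mul, abs_abs, abs_pow]
    have h7 : |x|^k ≤ b^k := pow_le_pow_left₀ (abs_nonneg x) hxb k
    have h8 : |if 0 ≤ P.coeff k then (1:ℝ) else mv x| ≤ 1 := by
      split_ifs with h
      · norm_num
      · exact hmx
    calc |P.coeff k| * |x|^k * |if 0 ≤ P.coeff k then (1:ℝ) else mv x|
        ≤ |P.coeff k| * b^k * 1 := by
          apply mul_le_mul _ h8 (abs_nonneg _) (by positivity)
          exact mul_le_mul_of_nonneg_left h7 (abs_nonneg _)
      _ = |P.coeff k| * b^k := by ring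
  -- the final polynomial
  set qp : Polynomial ℝ := gp * (sp * sp) with hqpdef
  have hsppos : NWaux.Pos sp := by rw [hspdef]; exact NWaux.mpoly_pos hB₂0.le
  have hqppos : NWaux.Pos qp := by
    rw [hqpdef]; exact hgppos.mul (hsppos.mul hsppos)
  have hqpeval : ∀ x : ℝ, qp.eval x = gp.eval x * sv x := by
    intro x; rw [hqpdef, Polynomial.eval_mul, hspeval]
  -- pointwise estimate
  have hmain : ∀ z : Set.Icc a 1, |qp.eval (z:ℝ) - F z| ≤ 4*E := by
    intro z
    obtain ⟨hz1, hz2⟩ := z.2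
    have hz1' : -b ≤ (z:ℝ) := by rw [hbdef, neg_neg]; exact hz1
    rcases le_or_gt (-c₁) (z:ℝ) with hA | hA
    · -- region A : -c₁ ≤ z ≤ 1
      have hs := sSmall (z:ℝ) hA hz2
      have hg := gBound (z:ℝ) hz1' hz2
      have hFs : |F z| ≤ E := smallF z (by rw [hc₁def] at hA; linarith)
      have hq : |qp.eval (z:ℝ)| ≤ E := by
        rw [hqpeval, abs_mul]
        calc |gp.eval (z:ℝ)| * |sv (z:ℝ)| ≤ W * η := by
              apply mul_le_mul hg _ (abs_nonneg _) hW0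
              rw [abs_of_nonneg (spos _)]; exact hs
          _ = η * W := by ring
          _ ≤ E := hηW
      calc |qp.eval (z:ℝ) - F z| ≤ |qp.eval (z:ℝ)| + |F z| := abs_sub _ _
        _ ≤ E + E := add_le_add hq hFs
        _ ≤ 4*E := by linarith
    · rcases le_or_gt (-c₂) (z:ℝ) with hB | hB
      · -- region B : -c₂ ≤ z ≤ -c₁
        have hge := gErr (z:ℝ) hz1' hA.le
        have hFs : |F z| ≤ E := smallF z (by rw [hc₂def] at hB; linarith)
        have hPz := hP z
        have hgb : |gp.eval (z:ℝ)| ≤ 3*E := by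
          have t1 : |gp.eval (z:ℝ)| ≤ |gp.eval (z:ℝ) - P.eval (z:ℝ)| + |P.eval (z:ℝ)| := by
            have := abs_sub (gp.eval (z:ℝ) - P.eval (z:ℝ)) (- P.eval (z:ℝ))
            simp only [sub_neg_eq_add, sub_add_cancel, abs_neg] at this
            exact this
          have t2 : |P.eval (z:ℝ)| ≤ |P.eval (z:ℝ) - F z| + |F z| := by
            have := abs_sub (P.eval (z:ℝ) - F z) (- F z)
            simp only [sub_neg_eq_add, sub_add_cancel, abs_neg] at this
            exact this
          linarith
        have hq : |qp.eval (z:ℝ)| ≤ 3*E := by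
          rw [hqpeval, abs_mul, abs_of_nonneg (spos _)]
          have hs1 := sIn (z:ℝ) hz1' hz2
          have hs0 := spos (z:ℝ)
          calc |gp.eval (z:ℝ)| * sv (z:ℝ) ≤ (3*E) * 1 :=
                mul_le_mul hgb hs1 hs0 (by linarith)
            _ = 3*E := mul_one _
        calc |qp.eval (z:ℝ) - F z| ≤ |qp.eval (z:ℝ)| + |F z| := abs_sub _ _
          _ ≤ 3*E + E := add_le_add hq hFs
          _ ≤ 4*E := by linarith
      · -- region C : z ≤ -c₂
        have hge := gErr (z:ℝ) hz1' (by linarith)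
        have hsp := sPlateau (z:ℝ) hz1' hB.le
        have hgb := gBound (z:ℝ) hz1' hz2
        have hPz := hP z
        have h1 : |qp.eval (z:ℝ) - F z| ≤ |gp.eval (z:ℝ)| * |sv (z:ℝ) - 1|
            + |gp.eval (z:ℝ) - P.eval (z:ℝ)| + |P.eval (z:ℝ) - F z| := by
          rw [hqpeval]
          have e : gp.eval (z:ℝ) * sv (z:ℝ) - F z
              = gp.eval (z:ℝ) * (sv (z:ℝ) - 1) + ((gp.eval (z:ℝ) - P.eval (z:ℝ))
                + (P.eval (z:ℝ) - F z)) := by ring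
          rw [e]
          refine le_trans (abs_add_le _ _) ?_
          rw [abs_mul]
          have := abs_add_le (gp.eval (z:ℝ) - P.eval (z:ℝ)) (P.eval (z:ℝ) - F z)
          linarith
        have h2 : |gp.eval (z:ℝ)| * |sv (z:ℝ) - 1| ≤ W * (2*η) := by
          apply mul_le_mul hgb hsp (abs_nonneg _) hW0
        have h3 : W * (2*η) ≤ 2*E := by
          have e6 : W * (2*η) = 2*(η*W) := by ring
          linarith
        linarith
  -- conclusion
  refine ⟨qp.toContinuousMapOn (Set.Icc a 1), ⟨qp, hqppos, fun z => ?_⟩, ?_⟩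
  · simp [Polynomial.toContinuousMapOn_apply, Polynomial.toContinuousMap_apply]
  · have hd4 : (0:ℝ) ≤ 4*E := by linarith
    have hdist : dist F (qp.toContinuousMapOn (Set.Icc a 1)) ≤ 4*E := by
      rw [ContinuousMap.dist_le hd4]
      intro z
      have hv : (qp.toContinuousMapOn (Set.Icc a 1)) z = qp.eval (z:ℝ) := by
        simp [Polynomial.toContinuousMapOn_apply, Polynomial.toContinuousMap_apply]
      rw [Real.dist_eq, hv, abs_sub_comm]
      exact hmain z
    calc dist F (qp.toContinuousMapOn (Set.Icc a 1)) ≤ 4*E := hdist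
      _ < ε := by linarith
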